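/- Let a > b > 0. The nonzero real solutions (V1, V2) of the system V1 = a·V1² + b·V2², V2 = b·V1² + a·V2² with V1, V2 > 0 are exactly: V1 = V2 = 1/(a+b), and, provided a² − 2ab − 3b² ≥ 0, the pair V1 = (a + b ± √(a² − 2ab − 3b²))/(2(a+b)(a−b)), V2 = (a + b ∓ √(a² − 2ab − 3b²))/(2(a+b)(a−b)). -/

import Mathlib

open Real

theorem two_spike_heights_classification (a b V1 V2 : ℝ)
    (hab : a > b) (hb : b > 0) (hV1 : V1 > 0) (hV2 : V2 > 0) :
    (V1 = a * V1^2 + b * V2^2 ∧ V2 = b * V1^2 + a * V2^2) ↔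
      (V1 = 1 / (a + b) ∧ V2 = 1 / (a + b)) ∨
      (a^2 - 2*a*b - 3*b^2 ≥ 0 ∧
        ((V1 = (a + b + Real.sqrt (a^2 - 2*a*b - 3*b^2)) / (2*(a+b)*(a-b)) ∧
          V2 = (a + b - Real.sqrt (a^2 - 2*a*b - 3*b^2)) / (2*(a+b)*(a-b))) ∨
         (V1 = (a + b - Real.sqrt (a^2 - 2*a*b - 3*b^2)) / (2*(a+b)*(a-b)) ∧
          V2 = (a + b + Real.sqrt (a^2 - 2*a*b - 3*b^2)) / (2*(a+b)*(a-b))))) := by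
  have hapb : a + b > 0 := by linarith
  have hamb : a - b > 0 := by linarith
  have hapb' : a + b ≠ 0 := ne_of_gt hapb
  have hamb' : a - b ≠ 0 := ne_of_gt hamb
  have hD : 2*(a+b)*(a-b) ≠ 0 := by positivity
  constructor
  · rintro ⟨h1, h2⟩
    have hfac : (V1 - V2) * (1 - (a-b)*(V1+V2)) = 0 := by linear_combination h1 - h2
    rcases mul_eq_zero.1 hfac with h12 | hs
    · -- V1 = V2
      have h12' : V1 = V2 := by linarith
      left
      have : V1 * (1 - (a+b)*V1) = 0 := by
        rw [h12'] at h1 ⊢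
        linear_combination h1
      rcases mul_eq_zero.1 this with h | h
      · exact absurd h (ne_of_gt hV1)
      · have : V1 = 1/(a+b) := by field_simp; linarith
        exact ⟨this, h12' ▸ this⟩
    · have hs' : (a-b)*(V1+V2) = 1 := by linarith
      have hsum : V1 + V2 = (a+b)*(V1^2+V2^2) := by linear_combination h1 + h2
      have hΔeq : a^2 - 2*a*b - 3*b^2 = ((a+b)*(a-b)*(V1-V2))^2 := by
        linear_combination 2*(a+b)*(a-b)^2 * hsum +
          (a+b)*((a+b)*(a-b)*(V1+V2) - a + 3*b) * hs'
      have hΔ : a^2 - 2*a*b - 3*b^2 ≥ 0 := by rw [hΔeq]; positivity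
      right
      refine ⟨hΔ, ?_⟩
      rcases le_total V2 V1 with hle | hle
      · left
        have hnn : 0 ≤ (a+b)*(a-b)*(V1-V2) := by
          apply mul_nonneg (by positivity) (by linarith)
        have hr : Real.sqrt (a^2 - 2*a*b - 3*b^2) = (a+b)*(a-b)*(V1-V2) := by
          rw [hΔeq, Real.sqrt_sq hnn]
        rw [hr]
        constructor <;> rw [eq_div_iff hD] <;> linear_combination (a+b)*hs'
      · right
        have hnn : 0 ≤ (a+b)*(a-b)*(V2-V1) := by
          apply mul_nonneg (by positivity) (by linarith)
        have hr : Real.sqrt (a^2 - 2*a*b - 3*b^2) = (a+b)*(a-b)*(V2-V1) := by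
          rw [hΔeq]
          rw [show ((a+b)*(a-b)*(V1-V2))^2 = ((a+b)*(a-b)*(V2-V1))^2 by ring,
            Real.sqrt_sq hnn]
        rw [hr]
        constructor <;> rw [eq_div_iff hD] <;> linear_combination (a+b)*hs'
  · rintro (⟨e1, e2⟩ | ⟨hΔ, ⟨e1, e2⟩ | ⟨e1, e2⟩⟩)
    · subst e1; subst e2
      constructor <;> field_simp <;> ring
    all_goals {
      have hr : (Real.sqrt (a^2 - 2*a*b - 3*b^2))^2 = a^2 - 2*a*b - 3*b^2 :=
        Real.sq_sqrt hΔ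
      subst e1; subst e2
      constructor <;>
        (rw [div_eq_iff hD]
         generalize Real.sqrt (a^2 - 2*a*b - 3*b^2) = s at hr ⊢
         field_simp
         linear_combination (-(a+b)) * hr) }
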